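/- Let A, B ∈ B(H) and let h : [0,∞) → [0,∞) be a nondecreasing convex function. Then h(ω(A*B)) ≤ (1/2)·h(‖A‖·‖B‖) + (1/2)·h(ω(BA*)). -/

import Mathlib

open ComplexConjugate

set_option linter.unusedSectionVars false

variable {H : Type*} [NormedAddCommGroup H] [InnerProductSpace ℂ H] [CompleteSpace H]

/-- The absolute value `|T| = (T*T)^(1/2)` of a bounded operator. -/
noncomputable def absOp (T : H →L[ℂ] H) : H →L[ℂ] H := CFC.sqrt (star T * T)

/-- The numerical radius `ω(T) = sup {|⟨Tx, x⟩| : ‖x‖ = 1}`. -/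
noncomputable def numRad (T : H →L[ℂ] H) : ℝ :=
  sSup {r : ℝ | ∃ x : H, ‖x‖ = 1 ∧ r = ‖(inner ℂ (T x) x : ℂ)‖}

lemma numRad_nonneg (T : H →L[ℂ] H) : 0 ≤ numRad T :=
  Real.sSup_nonneg (by rintro r ⟨x, hx, rfl⟩; positivity)

lemma numRad_bddAbove (T : H →L[ℂ] H) :
    BddAbove {r : ℝ | ∃ x : H, ‖x‖ = 1 ∧ r = ‖(inner ℂ (T x) x : ℂ)‖} := by
  refine ⟨‖T‖, ?_⟩
  rintro r ⟨x, hx, rfl⟩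
  calc ‖(inner ℂ (T x) x : ℂ)‖ ≤ ‖T x‖ * ‖x‖ := norm_inner_le_norm _ _
    _ ≤ ‖T‖ * ‖x‖ * ‖x‖ := by
        gcongr; exact T.le_opNorm x
    _ = ‖T‖ := by rw [hx]; ring

lemma norm_inner_le_numRad (T : H →L[ℂ] H) {x : H} (hx : ‖x‖ = 1) :
    ‖(inner ℂ (T x) x : ℂ)‖ ≤ numRad T :=
  le_csSup (numRad_bddAbove T) ⟨x, hx, rfl⟩

lemma selfadjoint_norm_le {D : H →L[ℂ] H} (hD : IsSelfAdjoint D) {M : ℝ} (hM : 0 ≤ M)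
    (hb : ∀ y : H, ‖y‖ = 1 → ‖(inner ℂ (D y) y : ℂ)‖ ≤ M) : ‖D‖ ≤ M := by
  have hb' : ∀ v : H, ‖(inner ℂ (D v) v : ℂ)‖ ≤ M * ‖v‖ ^ 2 := by
    intro v
    rcases eq_or_ne v 0 with rfl | hv
    · simp
    · have hnv : (0:ℝ) < ‖v‖ := norm_pos_iff.mpr hv
      have h1 := hb ((‖v‖⁻¹ : ℂ) • v) (by
        rw [norm_smul]; simp [norm_inv, hnv.ne', inv_mul_cancel₀ hnv.ne'])
      rw [map_smul, inner_smul_left, inner_smul_right] at h1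
      have : ‖(starRingEnd ℂ) (‖v‖⁻¹ : ℂ) * ((‖v‖⁻¹ : ℂ) * inner ℂ (D v) v)‖
          = ‖v‖⁻¹ * (‖v‖⁻¹ * ‖(inner ℂ (D v) v : ℂ)‖) := by
        simp [norm_mul, RCLike.norm_conj]
      rw [this] at h1
      have h1' : ‖(inner ℂ (D v) v : ℂ)‖ / ‖v‖ ^ 2 ≤ M := by
        have e : ‖v‖⁻¹ * (‖v‖⁻¹ * ‖(inner ℂ (D v) v : ℂ)‖) = ‖(inner ℂ (D v) v : ℂ)‖ / ‖v‖ ^ 2 := by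
          rw [div_eq_mul_inv, sq, mul_inv]
          ring
        rwa [e] at h1
      have := (div_le_iff₀ (by positivity : (0:ℝ) < ‖v‖ ^ 2)).mp h1'
      linarith
  have key : ∀ x y : H, ‖x‖ = 1 → ‖y‖ = 1 → Complex.re (inner ℂ (D x) y) ≤ M := by
    intro x y hx hy
    have hDadj : ContinuousLinearMap.adjoint D = D := ContinuousLinearMap.isSelfAdjoint_iff'.mp hD
    have e2 : (inner ℂ (D y) x : ℂ) = conj (inner ℂ (D x) y : ℂ) := by
      conv_lhs => rw [← hDadj]
      rw [ContinuousLinearMap.adjoint_inner_left, ← inner_conj_symm]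
    have e1 : (inner ℂ (D (x+y)) (x+y) : ℂ) - inner ℂ (D (x-y)) (x-y)
        = 2 * inner ℂ (D x) y + 2 * conj (inner ℂ (D x) y : ℂ) := by
      rw [← e2]
      simp only [map_add, map_sub, inner_add_left, inner_add_right, inner_sub_left,
        inner_sub_right]
      ring
    have e3 : 4 * Complex.re (inner ℂ (D x) y)
        = Complex.re ((inner ℂ (D (x+y)) (x+y) : ℂ)) - Complex.re ((inner ℂ (D (x-y)) (x-y) : ℂ)) := by
      have := congrArg Complex.re e1
      simp only [Complex.sub_re, Complex.add_re, Complex.mul_re, Complex.conj_re,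
        Complex.conj_im, Complex.re_ofNat, Complex.im_ofNat] at this ⊢
      linarith [this]
    have b1 : Complex.re ((inner ℂ (D (x+y)) (x+y) : ℂ)) ≤ M * ‖x+y‖^2 :=
      le_trans (Complex.re_le_norm _) (hb' _)
    have b2 : -(M * ‖x-y‖^2) ≤ Complex.re ((inner ℂ (D (x-y)) (x-y) : ℂ)) := by
      have := le_trans (Complex.abs_re_le_norm (inner ℂ (D (x-y)) (x-y) : ℂ)) (hb' _)
      have := abs_le.mp this
      linarith [this.1]
    have hpar := parallelogram_law_with_norm ℂ x y
    rw [hx, hy] at hpar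
    nlinarith [b1, b2, e3]
  refine D.opNorm_le_bound hM (fun v => ?_)
  rcases eq_or_ne v 0 with rfl | hv
  · simp
  · have hnv : (0:ℝ) < ‖v‖ := norm_pos_iff.mpr hv
    have hx : ‖(‖v‖⁻¹ : ℂ) • v‖ = 1 := by
      rw [norm_smul]; simp [hnv.ne', inv_mul_cancel₀ hnv.ne']
    set x := (‖v‖⁻¹ : ℂ) • v with hxdef
    have hunit : ‖D x‖ ≤ M := by
      rcases eq_or_ne (D x) 0 with h0 | h0
      · simp [h0, hM]
      · have hn : (0:ℝ) < ‖D x‖ := norm_pos_iff.mpr h0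
        have hy : ‖(‖D x‖⁻¹ : ℂ) • D x‖ = 1 := by
          rw [norm_smul]; simp [hn.ne', inv_mul_cancel₀ hn.ne']
        have := key x _ hx hy
        rw [inner_smul_right, inner_self_eq_norm_sq_to_K] at this
        have : Complex.re ((‖D x‖⁻¹ : ℂ) * (‖D x‖ : ℂ)^2) ≤ M := this
        rw [show ((‖D x‖⁻¹ : ℂ) * (‖D x‖ : ℂ)^2) = ((‖D x‖⁻¹ * ‖D x‖^2 : ℝ) : ℂ) by push_cast; ring,
          Complex.ofReal_re] at this
        calc ‖D x‖ = ‖D x‖⁻¹ * ‖D x‖^2 := by field_simp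
          _ ≤ M := this
    have : D v = (‖v‖ : ℂ) • D x := by
      rw [hxdef, map_smul, smul_smul]
      rw [mul_inv_cancel₀ (show (‖v‖:ℂ) ≠ 0 by exact_mod_cast hnv.ne')]
      simp
    rw [this, norm_smul]
    simp only [Complex.norm_real, Real.norm_eq_abs, abs_of_pos hnv]
    calc ‖v‖ * ‖D x‖ ≤ ‖v‖ * M := by gcongr
      _ = M * ‖v‖ := mul_comm _ _

lemma expand_mul_star (P Q : H →L[ℂ] H) (l : ℂ) (hll : l * star l = 1) :
    (P + l • Q) * star (P + l • Q)
      = P * star P + Q * star Q + (star l • (P * star Q) + l • (Q * star P)) := by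
  have hll' : star l * l = 1 := by rw [mul_comm]; exact hll
  rw [star_add, star_smul]
  simp only [mul_add, add_mul, smul_add, smul_mul_assoc, mul_smul_comm, smul_smul, hll, hll',
    one_smul]
  abel

lemma numRad_key (A B : H →L[ℂ] H) :
    numRad (star A * B) ≤ (‖A‖ * ‖B‖ + numRad (B * star A)) / 2 := by
  set G : H →L[ℂ] H := B * star A with hG
  have hnr : 0 ≤ numRad G := numRad_nonneg _
  have hRHS : (0:ℝ) ≤ (‖A‖ * ‖B‖ + numRad G) / 2 := by positivity
  apply Real.sSup_le _ hRHS
  rintro r ⟨x, hx, rfl⟩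
  have hcval : (inner ℂ ((star A * B) x) x : ℂ) = inner ℂ (B x) (A x) := by
    rw [ContinuousLinearMap.mul_apply, ContinuousLinearMap.star_eq_adjoint,
      ContinuousLinearMap.adjoint_inner_left]
  rw [hcval]
  set c : ℂ := inner ℂ (B x) (A x) with hc
  rcases eq_or_ne c 0 with h0 | h0
  · rw [h0]; simpa using hRHS
  have hA : (0:ℝ) < ‖A‖ := by
    rcases eq_or_lt_of_le (norm_nonneg A) with hA | hA
    · exact absurd (by simp [hc, show A = 0 by rwa [eq_comm, norm_eq_zero] at hA]) h0
    · exact hA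
  have hB : (0:ℝ) < ‖B‖ := by
    rcases eq_or_lt_of_le (norm_nonneg B) with hB | hB
    · exact absurd (by simp [hc, show B = 0 by rwa [eq_comm, norm_eq_zero] at hB]) h0
    · exact hB
  set t : ℝ := Real.sqrt (‖B‖ / ‖A‖) with htdef
  have ht : 0 < t := Real.sqrt_pos.mpr (by positivity)
  have ht2 : t ^ 2 = ‖B‖ / ‖A‖ := Real.sq_sqrt (by positivity)
  set l : ℂ := c / (‖c‖ : ℂ) with hl
  have hc0 : (0:ℝ) < ‖c‖ := norm_pos_iff.mpr h0
  have hlnorm : ‖l‖ = 1 := by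
    rw [hl, norm_div, Complex.norm_real, Real.norm_eq_abs, abs_of_pos hc0,
      div_self hc0.ne']
  have hlconj : l * conj c = (‖c‖ : ℂ) := by
    rw [hl, div_mul_eq_mul_div, Complex.mul_conj, Complex.normSq_eq_norm_sq]
    push_cast
    rw [sq, mul_div_assoc, div_self (show ((‖c‖:ℝ):ℂ) ≠ 0 by exact_mod_cast hc0.ne'), mul_one]
  have hll : l * star l = 1 := by
    rw [Complex.star_def, Complex.mul_conj, Complex.normSq_eq_norm_sq,
      hlnorm]
    norm_num
  set A1 : H →L[ℂ] H := ((t:ℝ) : ℂ) • A with hA1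
  set B1 : H →L[ℂ] H := ((t⁻¹ : ℝ) : ℂ) • B with hB1
  set C : H →L[ℂ] H := A1 + l • B1 with hC
  have htt : ((t:ℝ) : ℂ) * ((t⁻¹ : ℝ) : ℂ) = 1 := by
    rw [← Complex.ofReal_mul, mul_inv_cancel₀ ht.ne']; simp
  have htt' : ((t⁻¹:ℝ) : ℂ) * ((t : ℝ) : ℂ) = 1 := by rw [mul_comm]; exact htt
  -- inner of scaled operators
  have hinner1 : (inner ℂ (B1 x) (A1 x) : ℂ) = c := by
    rw [hB1, hA1]
    simp only [ContinuousLinearMap.smul_apply]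
    rw [inner_smul_left, inner_smul_right, Complex.conj_ofReal, ← hc, ← mul_assoc, htt',
      one_mul]
  -- norm of C x
  have hCx : ‖C x‖ ^ 2 = ‖A1 x‖ ^ 2 + ‖B1 x‖ ^ 2 + 2 * ‖c‖ := by
    have : C x = A1 x + l • (B1 x) := by
      simp [hC, ContinuousLinearMap.add_apply, ContinuousLinearMap.smul_apply]
    rw [this, @norm_add_sq ℂ]
    have h1 : (inner ℂ (A1 x) (l • B1 x) : ℂ) = l * conj c := by
      rw [inner_smul_right, ← inner_conj_symm, hinner1]
    have h2 : RCLike.re (inner ℂ (A1 x) (l • B1 x) : ℂ) = ‖c‖ := by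
      rw [h1, hlconj]; simp
    rw [h2, norm_smul, hlnorm, one_mul]
    ring
  -- Cauchy-Schwarz step
  have hcs : ‖c‖ ≤ ‖B1 x‖ * ‖A1 x‖ := by
    rw [← hinner1]; exact norm_inner_le_norm _ _
  have h4c : 4 * ‖c‖ ≤ ‖C x‖ ^ 2 := by nlinarith [sq_nonneg (‖A1 x‖ - ‖B1 x‖)]
  have hCxC : ‖C x‖ ≤ ‖C‖ := by
    have := C.le_opNorm x; rwa [hx, mul_one] at this
  have h4c' : 4 * ‖c‖ ≤ ‖C‖ ^ 2 := by nlinarith [norm_nonneg (C x), norm_nonneg C]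
  -- expansion
  set D : H →L[ℂ] H := star l • star G + l • G with hD
  have e2 : A1 * star B1 = star G := by
    rw [hA1, hB1, star_smul, Complex.star_def, Complex.conj_ofReal, smul_mul_smul_comm,
      htt, one_smul, hG, star_mul, star_star]
  have e3 : B1 * star A1 = G := by
    rw [hA1, hB1, star_smul, Complex.star_def, Complex.conj_ofReal, smul_mul_smul_comm,
      htt', one_smul, hG]
  have hexp : C * star C = A1 * star A1 + B1 * star B1 + D := by
    rw [hC, expand_mul_star A1 B1 l hll, e2, e3, hD]
  have hselfD : IsSelfAdjoint D := by
    rw [IsSelfAdjoint, hD, star_add, star_smul, star_smul, star_star, star_star]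
    abel
  have hDbound : ∀ y : H, ‖y‖ = 1 → ‖(inner ℂ (D y) y : ℂ)‖ ≤ 2 * numRad G := by
    intro y hy
    have happ : D y = star l • (star G y) + l • (G y) := by
      rw [hD, ContinuousLinearMap.add_apply, ContinuousLinearMap.smul_apply,
        ContinuousLinearMap.smul_apply]
    have hstarG : (inner ℂ ((star G) y) y : ℂ) = conj (inner ℂ (G y) y : ℂ) := by
      rw [ContinuousLinearMap.star_eq_adjoint, ContinuousLinearMap.adjoint_inner_left,
        ← inner_conj_symm]
    have : (inner ℂ (D y) y : ℂ) = conj (conj l * inner ℂ (G y) y) + conj l * inner ℂ (G y) y := by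
      rw [happ, inner_add_left, inner_smul_left, inner_smul_left, hstarG, Complex.star_def,
        Complex.conj_conj, map_mul, Complex.conj_conj]
    rw [this, add_comm, Complex.add_conj, Complex.norm_real, Real.norm_eq_abs]
    have hmu : ‖(inner ℂ (G y) y : ℂ)‖ ≤ numRad G := norm_inner_le_numRad G hy
    have habs : |((starRingEnd ℂ) l * inner ℂ (G y) y).re|
        ≤ ‖(starRingEnd ℂ) l * (inner ℂ (G y) y : ℂ)‖ := Complex.abs_re_le_norm _
    have hzn : ‖(starRingEnd ℂ) l * (inner ℂ (G y) y : ℂ)‖ = ‖(inner ℂ (G y) y : ℂ)‖ := by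
      rw [norm_mul, RCLike.norm_conj, hlnorm, one_mul]
    rw [abs_mul, abs_of_nonneg (by norm_num : (0:ℝ) ≤ 2)]
    rw [hzn] at habs
    nlinarith [habs, hmu]
  have hDnorm : ‖D‖ ≤ 2 * numRad G := selfadjoint_norm_le hselfD (by positivity) hDbound
  have hA1n : ‖A1‖ * ‖A1‖ = ‖A‖ * ‖B‖ := by
    rw [hA1, norm_smul, Complex.norm_real, Real.norm_eq_abs, abs_of_pos ht]
    have htt2 : t * t = ‖B‖ / ‖A‖ := by rw [← sq]; exact ht2
    calc (t * ‖A‖) * (t * ‖A‖) = (t * t) * (‖A‖ * ‖A‖) := by ring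
      _ = (‖B‖ / ‖A‖) * (‖A‖ * ‖A‖) := by rw [htt2]
      _ = ‖A‖ * ‖B‖ := by field_simp
  have hB1n : ‖B1‖ * ‖B1‖ = ‖A‖ * ‖B‖ := by
    rw [hB1, norm_smul, Complex.norm_real, Real.norm_eq_abs, abs_of_pos (by positivity : (0:ℝ) < t⁻¹)]
    have htt2 : t⁻¹ * t⁻¹ = ‖A‖ / ‖B‖ := by
      rw [← mul_inv, ← sq, ht2, inv_div]
    calc (t⁻¹ * ‖B‖) * (t⁻¹ * ‖B‖) = (t⁻¹ * t⁻¹) * (‖B‖ * ‖B‖) := by ring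
      _ = (‖A‖ / ‖B‖) * (‖B‖ * ‖B‖) := by rw [htt2]
      _ = ‖A‖ * ‖B‖ := by field_simp
  have hnormCC : ‖C‖ ^ 2 = ‖C * star C‖ := by rw [CStarRing.norm_self_mul_star, sq]
  have htri : ‖C * star C‖ ≤ ‖A1 * star A1‖ + ‖B1 * star B1‖ + ‖D‖ := by
    rw [hexp]
    exact le_trans (norm_add_le _ _) (by gcongr ?_ + _; exact norm_add_le _ _)
  have eA1 : ‖A1 * star A1‖ = ‖A‖ * ‖B‖ := by rw [CStarRing.norm_self_mul_star, hA1n]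
  have eB1 : ‖B1 * star B1‖ = ‖A‖ * ‖B‖ := by rw [CStarRing.norm_self_mul_star, hB1n]
  rw [eA1, eB1] at htri
  rw [hnormCC] at h4c'
  linarith

/-- Inequality (2.8): for a nondecreasing convex `h : [0,∞) → [0,∞)`,
`h(ω(A*B)) ≤ (1/2) h(‖A‖‖B‖) + (1/2) h(ω(BA*))`. -/
theorem numRad_convex_split (A B : H →L[ℂ] H) (h : ℝ → ℝ)
    (hmono : MonotoneOn h (Set.Ici (0 : ℝ))) (hconv : ConvexOn ℝ (Set.Ici (0 : ℝ)) h)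
    (hnn : ∀ t : ℝ, 0 ≤ t → 0 ≤ h t) :
    h (numRad (star A * B))
      ≤ (1 / 2) * h (‖A‖ * ‖B‖) + (1 / 2) * h (numRad (B * star A)) := by
  have hkey := numRad_key A B
  have hp : (0:ℝ) ≤ ‖A‖ * ‖B‖ := by positivity
  have hq : 0 ≤ numRad (B * star A) := numRad_nonneg _
  have h0 : 0 ≤ numRad (star A * B) := numRad_nonneg _
  have step1 : h (numRad (star A * B)) ≤ h ((‖A‖ * ‖B‖ + numRad (B * star A)) / 2) :=
    hmono (Set.mem_Ici.mpr h0) (Set.mem_Ici.mpr (by positivity)) hkey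
  have step2 : h ((‖A‖ * ‖B‖ + numRad (B * star A)) / 2)
      ≤ (1 / 2) * h (‖A‖ * ‖B‖) + (1 / 2) * h (numRad (B * star A)) := by
    have hcv := hconv.2 (Set.mem_Ici.mpr hp) (Set.mem_Ici.mpr hq)
      (by norm_num : (0:ℝ) ≤ 1/2) (by norm_num : (0:ℝ) ≤ 1/2) (by norm_num : (1/2:ℝ) + 1/2 = 1)
    have e : (1/2 : ℝ) • (‖A‖ * ‖B‖) + (1/2 : ℝ) • numRad (B * star A)
        = (‖A‖ * ‖B‖ + numRad (B * star A)) / 2 := by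
      simp only [smul_eq_mul]; ring
    rw [e] at hcv
    simpa only [smul_eq_mul] using hcv
  linarith
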